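/- There exists an integer n₀ such that for all n ≥ n₀ the following holds: if F and G are nonempty families of subsets of [n] such that there is no pair F ∈ F, G ∈ G with F ⊊ G or G ⊊ F (strict containment forbidden, common members allowed), then |F| + |G| ≤ 2^n − 2^⌈n/2⌉ − 2^⌊n/2⌋ + 3. -/

import Mathlib

/-- The weak cross-Sperner property: no pair `F ∈ 𝓕`, `G ∈ 𝓖` with
`F ⊊ G` or `G ⊊ F` (common members of `𝓕` and `𝓖` are allowed). -/
def WeakCrossSperner (𝓕 𝓖 : Finset (Finset ℕ)) : Prop :=
  ∀ F ∈ 𝓕, ∀ G ∈ 𝓖, ¬ F ⊂ G ∧ ¬ G ⊂ F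

open Finset

namespace WCSproof


lemma add_le_mul2 {x y : ℕ} (hx : 2 ≤ x) (hy : 2 ≤ y) : x + y ≤ x * y := by nlinarith

lemma two_le_pow {c : ℕ} (hc : 1 ≤ c) : 2 ≤ 2 ^ c := by
  calc 2 = 2^1 := by norm_num
  _ ≤ 2^c := Nat.pow_le_pow_right (by norm_num) hc

/-- Convexity of powers of 2: if `a + b ≥ m` then `2^a + 2^b ≥ 2^⌈m/2⌉ + 2^⌊m/2⌋`. -/
lemma pow2_convex {m a b : ℕ} (hm : 2 ≤ m) (hab : m ≤ a + b) :
    2 ^ ((m + 1) / 2) + 2 ^ (m / 2) ≤ 2 ^ a + 2 ^ b := by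
  wlog hba : a ≤ b generalizing a b
  · rw [add_comm (2^a)]; exact this (by omega) (by omega)
  have hb1 : (m+1)/2 ≤ b := by omega
  by_cases hbm : m ≤ b
  · have h1 : (2:ℕ)^(m/2) * 2^((m+1)/2) ≤ 2^b := by
      rw [← pow_add]; exact Nat.pow_le_pow_right (by norm_num) (by omega)
    have h2 := add_le_mul2 (two_le_pow (c := m/2) (by omega)) (two_le_pow (c := (m+1)/2) (by omega))
    have h3 : 0 < 2^a := by positivity
    linarith
  · push_neg at hbm
    have h2 : (2:ℕ)^(m-b) ≤ 2^a := Nat.pow_le_pow_right (by norm_num) (by omega)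
    have key : 2^b * (2^((m+1)/2) + 2^(m/2)) ≤ 2^b * (2^(m-b) + 2^b) := by
      have e1 : (2:ℕ)^b * 2^(m-b) = 2^(m/2) * 2^((m+1)/2) := by
        rw [← pow_add, ← pow_add]; congr 1; omega
      have h3 : (2:ℕ)^((m+1)/2) ≤ 2^b := Nat.pow_le_pow_right (by norm_num) hb1
      have h4 : (2:ℕ)^(m/2) ≤ 2^((m+1)/2) := Nat.pow_le_pow_right (by norm_num) (by omega)
      zify at *
      nlinarith [mul_nonneg (sub_nonneg.2 h3) (sub_nonneg.2 (h4.trans h3))]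
    have h5 := Nat.le_of_mul_le_mul_left key (by positivity)
    linarith

/-- `(3m+1) * centralBinom(m)^2 ≤ 16^m`. -/
lemma cb_sq_bound : ∀ m : ℕ, (3*m+1) * (Nat.centralBinom m)^2 ≤ 16^m := by
  intro m
  induction m with
  | zero => simp [Nat.centralBinom]
  | succ m ih =>
    have hrec := Nat.succ_mul_centralBinom_succ m
    have hkey : (3*(m+1)+1) * ((m+1) * Nat.centralBinom (m+1))^2 ≤ (m+1)^2 * (16 * 16^m) := by
      rw [hrec]
      calc (3*(m+1)+1) * (2*(2*m+1) * Nat.centralBinom m)^2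
          = ((3*m+4) * (4*(2*m+1)^2)) * (Nat.centralBinom m)^2 := by ring
        _ ≤ (16*(m+1)^2*(3*m+1)) * (Nat.centralBinom m)^2 := by
            apply Nat.mul_le_mul_right; nlinarith
        _ = (m+1)^2 * (16 * ((3*m+1) * (Nat.centralBinom m)^2)) := by ring
        _ ≤ (m+1)^2 * (16 * 16^m) := by
            apply Nat.mul_le_mul_left; apply Nat.mul_le_mul_left; exact ih
    have : (m+1)^2 * ((3*(m+1)+1) * (Nat.centralBinom (m+1))^2) ≤ (m+1)^2 * (16*16^m) := by
      calc (m+1)^2 * ((3*(m+1)+1) * (Nat.centralBinom (m+1))^2)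
          = (3*(m+1)+1) * ((m+1) * Nat.centralBinom (m+1))^2 := by ring
        _ ≤ _ := hkey
    have := Nat.le_of_mul_le_mul_left this (by positivity)
    calc (3*(m+1)+1) * Nat.centralBinom (m+1)^2 ≤ 16*16^m := this
      _ = 16^(m+1) := by ring

/-- `19 * C(d, d/2) ≤ 2^d` for `d ≥ 962`. -/
lemma choose_mid_bound {d : ℕ} (hd : 962 ≤ d) : 19 * d.choose (d/2) ≤ 2^d := by
  have key : ∀ m : ℕ, 120 ≤ m → 19 * Nat.centralBinom m ≤ 4^m := by
    intro m hm
    have h1 := cb_sq_bound m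
    have h2 : (19 * Nat.centralBinom m)^2 ≤ (4^m)^2 := by
      calc (19 * Nat.centralBinom m)^2 = 361 * (Nat.centralBinom m)^2 := by ring
        _ ≤ (3*m+1) * (Nat.centralBinom m)^2 := by
            apply Nat.mul_le_mul_right; omega
        _ ≤ 16^m := h1
        _ = (4^m)^2 := by
            rw [← pow_mul, show (16:ℕ) = 4^2 by norm_num, ← pow_mul]
            ring_nf
    exact (Nat.pow_le_pow_iff_left (by norm_num)).mp h2
  -- now split on parity of d
  rcases Nat.even_or_odd d with ⟨m, hm⟩ | ⟨m, hm⟩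
  · have hd2 : d/2 = m := by omega
    have hcb : d.choose (d/2) = Nat.centralBinom m := by
      rw [hd2, Nat.centralBinom, hm, Nat.two_mul]
    rw [hcb]
    calc 19 * Nat.centralBinom m ≤ 4^m := key m (by omega)
      _ = 2^d := by rw [show (4:ℕ) = 2^2 by norm_num, ← pow_mul]; congr 1; omega
  · have hd2 : d/2 = m := by omega
    have hm1 : 1 ≤ m := by omega
    have hpascal : d.choose (d/2) ≤ 2 * Nat.centralBinom m := by
      rw [hd2]
      have : d = (2*m) + 1 := by omega
      rw [this]
      have h1 : (2*m+1).choose m = (2*m).choose (m-1) + (2*m).choose m := by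
        rcases Nat.exists_eq_add_of_le hm1 with ⟨j, hj⟩
        rw [show m = j + 1 by omega]
        rw [show 2*(j+1)+1 = (2*(j+1)) + 1 by ring, show j+1-1 = j by omega,
          Nat.choose_succ_succ (2*(j+1)) j]
      rw [h1, Nat.centralBinom]
      have h2 : (2*m).choose (m-1) ≤ (2*m).choose ((2*m)/2) := Nat.choose_le_middle _ _
      have h3 : (2*m)/2 = m := by omega
      rw [h3] at h2
      omega
    calc 19 * d.choose (d/2) ≤ 19 * (2 * Nat.centralBinom m) := by
          exact Nat.mul_le_mul_left _ hpascal
      _ = 2 * (19 * Nat.centralBinom m) := by ring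
      _ ≤ 2 * 4^m := by exact Nat.mul_le_mul_left _ (key m (by omega))
      _ ≤ 2^d := by
          rw [show (4:ℕ) = 2^2 by norm_num, ← pow_mul]
          calc 2 * 2^(2*m) = 2^(2*m+1) := by ring
            _ ≤ 2^d := Nat.pow_le_pow_right (by norm_num) (by omega)



lemma odd_small_case {u0 t p q S : ℤ} (hu0 : 1024 ≤ u0) (ht2 : 2 ≤ t) (ht8 : 8*t < u0)
    (hp : 2*u0 ≤ p) (hq1 : 1 ≤ q) (hpq : t * (2*u0*u0) ≤ p * q)
    (hS : S = 3*t + 3*u0 - 4) (hcon : p + q ≤ S) : False := by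
  by_cases hqa : u0 + 3*t - 3 ≤ q
  · linarith
  · have hq0 : q ≤ u0 + 3*t - 4 := by linarith
    have hmono : (S - q) * q ≤ (S - (u0+3*t-4)) * (u0+3*t-4) := by
      nlinarith [mul_nonneg (show (0:ℤ) ≤ (u0+3*t-4) - q by linarith)
        (show (0:ℤ) ≤ S - (u0+3*t-4) - q by nlinarith)]
    have h2 : t * (2*u0*u0) ≤ 2*u0*(u0+3*t-4) := by nlinarith
    have hlin : (0:ℤ) < (t-1)*u0 - 3*t + 4 := by nlinarith
    have hprod := mul_pos (show (0:ℤ) < u0 by linarith) hlin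
    nlinarith [h2, hprod]

lemma odd_big_case {u0 t : ℤ} (hu0 : 1024 ≤ u0) (ht9 : 128 ≤ t) (ht8 : u0 ≤ 8*t)
    (hts : 19*t ≤ 2*(u0*u0)) (hA : 8*(t*(u0*u0)) ≤ (3*t+3*u0-4)^2) : False := by
  have hP1 : 171*(t*t) ≤ 18*(t*(u0*u0)) := by nlinarith
  have hP2 : 1024*(18*(t*u0)) ≤ 18*(t*(u0*u0)) := by nlinarith
  have hP3 : 9*(u0*u0) ≤ 72*(t*u0) := by nlinarith
  have hP4 : 1024*(72*(t*u0)) ≤ 72*(t*(u0*u0)) := by linarith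
  have hPpos : (0:ℤ) < t*(u0*u0) := by positivity
  nlinarith [hA, hP1, hP2, hP3, hP4, hPpos]

lemma even_case {u0 t p q : ℤ} (hu0 : 1024 ≤ u0) (ht2 : 2 ≤ t)
    (hts : 19*t ≤ u0*u0) (hsq : 4*(t*(u0*u0)) ≤ (p+q)^2) (h0 : 0 ≤ p + q)
    (hcon : p + q + 4 ≤ 3*t + 2*u0) : False := by
  have hcc : (p+q)^2 ≤ (3*t + 2*u0 - 4)^2 := by nlinarith
  have hA : 4*(t*(u0*u0)) ≤ (3*t + 2*u0 - 4)^2 := le_trans hsq hcc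
  by_cases ht4 : 4 ≤ t
  · have hP1 : 19*(9*(t*t)) ≤ 9*(t*(u0*u0)) := by nlinarith
    have hP2 : 1024*(12*(t*u0)) ≤ 12*(t*(u0*u0)) := by nlinarith
    have hP3 : 4*(u0*u0) ≤ t*(u0*u0) := by nlinarith
    have hPpos : (0:ℤ) < t*(u0*u0) := by positivity
    nlinarith [hA, hP1, hP2, hP3, hPpos]
  · have ht3 : t = 2 ∨ t = 3 := by omega
    rcases ht3 with rfl | rfl
    · nlinarith [hA, hu0]
    · nlinarith [hA, hu0]

lemma odd_case {u0 t p q : ℤ} (hu0 : 1024 ≤ u0) (ht2 : 2 ≤ t)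
    (hts : 19*t ≤ 2*(u0*u0)) (hp : 2*u0 ≤ p) (hq1 : 1 ≤ q)
    (hpq : t*(2*u0*u0) ≤ p*q) (hcon : p + q + 4 ≤ 3*t + 3*u0) : False := by
  by_cases ht8 : 8*t < u0
  · exact odd_small_case hu0 ht2 ht8 hp hq1 hpq rfl (by linarith)
  · push_neg at ht8
    have ht9 : 128 ≤ t := by linarith
    have hsq : 4*(t*(2*(u0*u0))) ≤ (p+q)^2 := by nlinarith [sq_nonneg (p - q)]
    have h0 : (0:ℤ) ≤ p + q := by linarith
    have hcc : (p+q)^2 ≤ (3*t + 3*u0 - 4)^2 := by nlinarith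
    exact odd_big_case hu0 ht9 ht8 hts (by nlinarith [hsq, hcc])

/-- Main analytic inequality. -/
lemma analytic {d t p q a b : ℕ} (hd : 1000 ≤ d) (ht : 1 ≤ t)
    (hts : 19 * t ≤ 2^d) (hpq : t * 2^d ≤ p * q)
    (hp : 2^a ≤ p) (hq : 2^b ≤ q) (hab : d ≤ a + b) :
    3*t + 2^((d+1)/2) + 2^(d/2) ≤ p + q + 3 := by
  have hu0big : 1024 ≤ 2^(d/2) := by
    calc (1024:ℕ) = 2^10 := by norm_num
    _ ≤ 2^(d/2) := Nat.pow_le_pow_right (by norm_num) (by omega)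
  by_cases ht1 : t = 1
  · subst ht1
    have := pow2_convex (m := d) (by omega) hab
    have h1 : 2^((d+1)/2) + 2^(d/2) ≤ p + q := le_trans this (by gcongr)
    omega
  have ht2 : 2 ≤ t := by omega
  by_contra hcon
  push_neg at hcon
  have hcon' : p + q + 4 ≤ 3*t + 2^((d+1)/2) + 2^(d/2) := by omega
  rcases Nat.even_or_odd d with ⟨m, hm⟩ | ⟨m, hm⟩
  · have he : (2:ℕ)^((d+1)/2) = 2^(d/2) := by congr 1; omega
    have hN' : (2:ℕ)^(d/2) * 2^(d/2) = 2^d := by rw [← pow_add]; congr 1; omega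
    rw [he] at hcon'
    have hsq : 4 * (t * (2^(d/2) * 2^(d/2))) ≤ (p + q)^2 := by
      rw [hN']; nlinarith [hpq, two_mul_le_add_sq p q]
    refine even_case (u0 := ((2:ℤ)^(d/2))) (t := (t:ℤ)) (p := (p:ℤ)) (q := (q:ℤ))
      ?_ ?_ ?_ ?_ (by positivity) ?_
    · exact_mod_cast hu0big
    · exact_mod_cast ht2
    · rw [show ((2:ℤ)^(d/2) * 2^(d/2)) = ((2^d : ℕ) : ℤ) by push_cast [← pow_add]; congr 1; omega]
      exact_mod_cast hts
    · exact_mod_cast hsq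
    · push_cast
      have : ((p:ℤ)) + q + 4 ≤ 3*t + 2^((d/2)) + 2^(d/2) := by exact_mod_cast hcon'
      linarith
  · have he : (2:ℕ)^((d+1)/2) = 2 * 2^(d/2) := by
      rw [show (d+1)/2 = d/2 + 1 by omega, pow_succ]; ring
    have hN' : 2 * (2^(d/2) * 2^(d/2)) = 2^d := by
      rw [show (2:ℕ) * (2^(d/2) * 2^(d/2)) = 2^(d/2+1+(d/2)) by ring, ]; congr 1; omega
    rw [he] at hcon'
    have hq1 : 1 ≤ q := lt_of_lt_of_le (by positivity) hq
    have hp1 : 1 ≤ p := lt_of_lt_of_le (by positivity) hp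
    have key : ∀ p' q' : ℕ, 2^((d+1)/2) ≤ p' → 1 ≤ q' → t * 2^d ≤ p' * q' →
        p' + q' = p + q → False := by
      intro p' q' hp' hq' hpq' hsum
      rw [he] at hp'
      refine odd_case (u0 := ((2:ℤ)^(d/2))) (t := (t:ℤ)) (p := (p':ℤ)) (q := (q':ℤ))
        ?_ ?_ ?_ ?_ ?_ ?_ ?_
      · exact_mod_cast hu0big
      · exact_mod_cast ht2
      · rw [show (2*((2:ℤ)^(d/2) * 2^(d/2))) = ((2^d : ℕ) : ℤ) by
          push_cast
          rw [show (2:ℤ)*((2:ℤ)^(d/2)*2^(d/2)) = 2^(1+(d/2+d/2)) by rw [pow_add, pow_add]; ring]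
          congr 1; omega]
        exact_mod_cast hts
      · exact_mod_cast hp'
      · exact_mod_cast hq'
      · rw [show ((t:ℤ)*(2*(2:ℤ)^(d/2) * 2^(d/2))) = t * ((2^d : ℕ) : ℤ) by
          push_cast; rw [show (2:ℤ)*(2:ℤ)^(d/2)*2^(d/2) = 2^(1+(d/2+d/2)) by rw [pow_add, pow_add]; ring]
          rw [show (1+(d/2+d/2)) = d by omega]]
        exact_mod_cast hpq'
      · have hs2 : (p':ℤ) + q' = (p:ℤ) + q := by exact_mod_cast hsum
        have : (p:ℤ) + q + 4 ≤ 3*t + 2*2^(d/2) + 2^(d/2) := by exact_mod_cast hcon'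
        linarith [hs2]
    rcases (show (d+1)/2 ≤ a ∨ (d+1)/2 ≤ b by omega) with hw | hw
    · exact key p q (le_trans (Nat.pow_le_pow_right (by norm_num) hw) hp) hq1 hpq rfl
    · exact key q p (le_trans (Nat.pow_le_pow_right (by norm_num) hw) hq) hp1
        (by rw [Nat.mul_comm q p]; exact hpq) (by omega)


lemma residual_core {u0 u1 N P Q r f : ℤ} (hu0 : 1024 ≤ u0) (hu01 : u0 ≤ u1) (hu1 : u1 ≤ 2*u0)
    (hN : u1*u0 = N) (hf2 : 2 ≤ f) (hfr : f ≤ r) (hPQ : r*N ≤ P*Q) (h0P : 0 ≤ P) (h0Q : 0 ≤ Q)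
    (hrN : r + u1 + u0 ≤ N + 1) (hconv : u0 + u1 + u0 ≤ P + Q)
    (hcon : P + Q + 4 ≤ r + f + u1 + u0) : False := by
  have hu0sq : u0*u0 ≤ N := by nlinarith
  by_cases hr : r ≤ 3
  · linarith
  · push_neg at hr
    have hr4 : 4 ≤ r := by linarith
    have hsq : 4*(r*N) ≤ (P+Q)^2 := by nlinarith [sq_nonneg (P-Q)]
    have hcc : (P+Q)^2 ≤ (2*r + u1 + u0 - 4)^2 := by nlinarith
    have hA : 4*(r*N) ≤ (2*r + u1 + u0 - 4)^2 := le_trans hsq hcc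
    have hpr : 0 ≤ (r-4)*((N+1-u1-u0)-r) := by
      apply mul_nonneg <;> linarith
    nlinarith [hA, hpr, hu0sq, hu0, hr4, hu1, hu01]


variable {α : Type*} [Fintype α] [DecidableEq α]

/-- down-closure of a family, within all of `Finset α`. -/
def low (𝓐 : Finset (Finset α)) : Finset (Finset α) :=
  Finset.univ.filter (fun X => ∃ A ∈ 𝓐, X ⊆ A)

/-- up-closure of a family. -/
def high (𝓐 : Finset (Finset α)) : Finset (Finset α) :=
  Finset.univ.filter (fun X => ∃ A ∈ 𝓐, A ⊆ X)

lemma mem_low {𝓐 : Finset (Finset α)} {X : Finset α} :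
    X ∈ low 𝓐 ↔ ∃ A ∈ 𝓐, X ⊆ A := by simp [low]

lemma mem_high {𝓐 : Finset (Finset α)} {X : Finset α} :
    X ∈ high 𝓐 ↔ ∃ A ∈ 𝓐, A ⊆ X := by simp [high]

lemma isLowerSet_low {𝓐 : Finset (Finset α)} : IsLowerSet ((low 𝓐 : Finset (Finset α)) : Set (Finset α)) := by
  intro X Y hYX hX
  simp only [Finset.mem_coe, mem_low] at *
  obtain ⟨A, hA, hXA⟩ := hX
  exact ⟨A, hA, le_trans hYX hXA⟩

lemma isUpperSet_high {𝓐 : Finset (Finset α)} : IsUpperSet ((high 𝓐 : Finset (Finset α)) : Set (Finset α)) := by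
  intro X Y hXY hX
  simp only [Finset.mem_coe, mem_high] at *
  obtain ⟨A, hA, hAX⟩ := hX
  exact ⟨A, hA, le_trans hAX hXY⟩

lemma subset_low {𝓐 : Finset (Finset α)} : 𝓐 ⊆ low 𝓐 :=
  fun A hA => mem_low.2 ⟨A, hA, Finset.Subset.refl A⟩

lemma subset_high {𝓐 : Finset (Finset α)} : 𝓐 ⊆ high 𝓐 :=
  fun A hA => mem_high.2 ⟨A, hA, Finset.Subset.refl A⟩

lemma kleitman (𝓐 𝓑 : Finset (Finset α)) :
    (low 𝓐 ∩ high 𝓑).card * 2 ^ (Fintype.card α) ≤ (low 𝓐).card * (high 𝓑).card := by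
  have := IsLowerSet.card_inter_le_finset (𝒜 := low 𝓐) (ℬ := high 𝓑)
    isLowerSet_low isUpperSet_high
  linarith

lemma pow_le_card_low {𝓐 : Finset (Finset α)} {A : Finset α} (hA : A ∈ 𝓐) :
    2 ^ A.card ≤ (low 𝓐).card := by
  rw [← Finset.card_powerset]
  apply Finset.card_le_card
  intro X hX
  exact mem_low.2 ⟨A, hA, Finset.mem_powerset.1 hX⟩

lemma pow_le_card_high {𝓐 : Finset (Finset α)} {A : Finset α} (hA : A ∈ 𝓐) :
    2 ^ (Fintype.card α - A.card) ≤ (high 𝓐).card := by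
  have hcompl : (Aᶜ : Finset α).card = Fintype.card α - A.card := Finset.card_compl A
  rw [← hcompl, ← Finset.card_powerset]
  apply Finset.card_le_card_of_injOn (fun Y => Y ∪ A)
  · intro Y hY
    exact mem_high.2 ⟨A, hA, Finset.subset_union_right⟩
  · intro Y₁ hY₁ Y₂ hY₂ he
    simp only [Finset.mem_coe, Finset.mem_powerset] at hY₁ hY₂
    have he' : Y₁ ∪ A = Y₂ ∪ A := he
    ext a
    constructor
    · intro ha
      have ha' : a ∈ Y₂ ∪ A := he' ▸ (Finset.mem_union_left _ ha)
      rcases Finset.mem_union.1 ha' with h | h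
      · exact h
      · exact absurd h (by simpa using (hY₁ ha))
    · intro ha
      have ha' : a ∈ Y₁ ∪ A := he'.symm ▸ (Finset.mem_union_left _ ha)
      rcases Finset.mem_union.1 ha' with h | h
      · exact h
      · exact absurd h (by simpa using (hY₂ ha))

lemma card_finsets : (Finset.univ : Finset (Finset α)).card = 2 ^ (Fintype.card α) := by
  rw [Finset.card_univ, Fintype.card_finset]


variable {α : Type*} [Fintype α] [DecidableEq α]
/-- Case where `𝓕 ∩ 𝓖` is nonempty. -/
lemma case_one (hd : 1000 ≤ Fintype.card α) (𝓕 𝓖 : Finset (Finset α))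
    (hW : ∀ F ∈ 𝓕, ∀ G ∈ 𝓖, ¬F ⊂ G ∧ ¬G ⊂ F) (hT : (𝓕 ∩ 𝓖).Nonempty) :
    𝓕.card + 𝓖.card + 2^((Fintype.card α + 1)/2) + 2^(Fintype.card α / 2)
      ≤ 2^(Fintype.card α) + 3 := by
  set d := Fintype.card α with hddef
  set T := 𝓕 ∩ 𝓖 with hTdef
  -- T is an antichain
  have hTanti : IsAntichain (· ⊆ ·) (T : Set (Finset α)) := by
    intro X hX Y hY hne hsub
    simp only [Finset.mem_coe, hTdef, Finset.mem_inter] at hX hY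
    exact (hW X hX.1 Y hY.2).1 (ssubset_of_subset_of_ne hsub hne)
  have hsper : T.card ≤ d.choose (d/2) := IsAntichain.sperner hTanti
  have hts : 19 * T.card ≤ 2^d :=
    le_trans (Nat.mul_le_mul_left _ hsper) (choose_mid_bound (by omega))
  -- closures
  have hTlow : T ⊆ low T := subset_low
  have hThigh : T ⊆ high T := subset_high
  have hinter : low T ∩ high T = T := by
    apply Finset.Subset.antisymm
    · intro X hX
      obtain ⟨hXl, hXh⟩ := Finset.mem_inter.1 hX
      obtain ⟨A, hA, hXA⟩ := mem_low.1 hXl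
      obtain ⟨B, hB, hBX⟩ := mem_high.1 hXh
      have hBA : B ⊆ A := hBX.trans hXA
      have hABeq : B = A := by
        by_contra hne
        exact hTanti (Finset.mem_coe.2 hB) (Finset.mem_coe.2 hA) hne hBA
      have : X = A := Finset.Subset.antisymm hXA (hABeq ▸ hBX)
      exact this ▸ hA
    · exact fun X hX => Finset.mem_inter.2 ⟨hTlow hX, hThigh hX⟩
  have hkl : T.card * 2^d ≤ (low T).card * (high T).card := by
    have := kleitman T T
    rwa [hinter] at this
  -- a distinguished element of T
  obtain ⟨F₀, hF₀⟩ := hT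
  have hF₀d : F₀.card ≤ d := by
    rw [hddef, ← Finset.card_univ]; exact Finset.card_le_card (Finset.subset_univ F₀)
  have hP := pow_le_card_low (𝓐 := T) hF₀
  have hQ := pow_le_card_high (𝓐 := T) hF₀
  have hana := analytic (d := d) (t := T.card) (p := (low T).card) (q := (high T).card)
    (a := F₀.card) (b := d - F₀.card) hd (Finset.card_pos.2 ⟨F₀, hF₀⟩) hts hkl hP hQ (by omega)
  -- the witness family W
  set W := (low T ∪ high T) \ T with hWdef
  have hWdisj : Disjoint (𝓕 ∪ 𝓖) W := by
    rw [Finset.disjoint_right]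
    intro X hXW hXFG
    obtain ⟨hXu, hXnT⟩ := Finset.mem_sdiff.1 hXW
    rcases Finset.mem_union.1 hXu with hXl | hXh
    · obtain ⟨A, hA, hXA⟩ := mem_low.1 hXl
      have hXssA : X ⊂ A := by
        refine ssubset_of_subset_of_ne hXA (fun h => hXnT (h ▸ hA))
      have hA𝓕 : A ∈ 𝓕 := (Finset.mem_inter.1 hA).1
      have hA𝓖 : A ∈ 𝓖 := (Finset.mem_inter.1 hA).2
      rcases Finset.mem_union.1 hXFG with hX𝓕 | hX𝓖
      · exact (hW X hX𝓕 A hA𝓖).1 hXssA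
      · exact (hW A hA𝓕 X hX𝓖).2 hXssA
    · obtain ⟨A, hA, hAX⟩ := mem_high.1 hXh
      have hAssX : A ⊂ X := by
        refine ssubset_of_subset_of_ne hAX (fun h => hXnT (h ▸ hA))
      have hA𝓕 : A ∈ 𝓕 := (Finset.mem_inter.1 hA).1
      have hA𝓖 : A ∈ 𝓖 := (Finset.mem_inter.1 hA).2
      rcases Finset.mem_union.1 hXFG with hX𝓕 | hX𝓖
      · exact (hW X hX𝓕 A hA𝓖).2 hAssX
      · exact (hW A hA𝓕 X hX𝓖).1 hAssX
  -- counting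
  have hc1 : (𝓕 ∪ 𝓖).card + T.card = 𝓕.card + 𝓖.card := Finset.card_union_add_card_inter 𝓕 𝓖
  have hc2 : (low T ∪ high T).card + T.card = (low T).card + (high T).card := by
    have := Finset.card_union_add_card_inter (low T) (high T)
    rwa [hinter] at this
  have hc3 : W.card + T.card = (low T ∪ high T).card := by
    apply Finset.card_sdiff_add_card_eq_card
    exact fun X hX => Finset.mem_union.2 (Or.inl (hTlow hX))
  have hc4 : (𝓕 ∪ 𝓖).card + W.card ≤ 2^d := by
    rw [← Finset.card_union_of_disjoint hWdisj, ← card_finsets (α := α)]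
    exact Finset.card_le_card (Finset.subset_univ _)
  omega


lemma injOn_union_compl {A : Finset α} :
    Set.InjOn (fun Y => Y ∪ A) ((Aᶜ : Finset α).powerset : Set (Finset α)) := by
  intro Y₁ hY₁ Y₂ hY₂ he
  simp only [Finset.coe_powerset, Set.mem_preimage, Set.mem_powerset_iff, Finset.coe_subset,
    Finset.mem_coe, Set.mem_setOf_eq] at hY₁ hY₂
  have hY₁' : Y₁ ⊆ Aᶜ := by simpa using hY₁
  have hY₂' : Y₂ ⊆ Aᶜ := by simpa using hY₂
  have he' : Y₁ ∪ A = Y₂ ∪ A := he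
  ext a
  constructor
  · intro ha
    have ha' : a ∈ Y₂ ∪ A := he' ▸ (Finset.mem_union_left _ ha)
    rcases Finset.mem_union.1 ha' with h | h
    · exact h
    · exact absurd h (by simpa using (hY₁' ha))
  · intro ha
    have ha' : a ∈ Y₁ ∪ A := he'.symm ▸ (Finset.mem_union_left _ ha)
    rcases Finset.mem_union.1 ha' with h | h
    · exact h
    · exact absurd h (by simpa using (hY₂' ha))

/-- Residual case: `𝓕 ∩ 𝓖 = ∅` and every member of `𝓕` is strictly comparable to
another member of `𝓕`. -/
lemma residual (hd : 1000 ≤ Fintype.card α) (𝓕 𝓖 : Finset (Finset α))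
    (hW : ∀ F ∈ 𝓕, ∀ G ∈ 𝓖, ¬F ⊂ G ∧ ¬G ⊂ F) (h𝓕 : 𝓕.Nonempty) (h𝓖 : 𝓖.Nonempty)
    (hT : 𝓕 ∩ 𝓖 = ∅)
    (hni : ∀ F₀ ∈ 𝓕, ∃ F ∈ 𝓕, F ⊂ F₀ ∨ F₀ ⊂ F) :
    𝓕.card + 𝓖.card + 2^((Fintype.card α + 1)/2) + 2^(Fintype.card α / 2)
      ≤ 2^(Fintype.card α) + 3 := by
  set d := Fintype.card α with hddef
  set u0 := 2^(d/2) with hu0def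
  set u1 := 2^((d+1)/2) with hu1def
  set P := (low 𝓕).card with hPdef
  set Q := (high 𝓕).card with hQdef
  set R := low 𝓕 ∩ high 𝓕 with hRdef
  set r := R.card with hrdef
  set f := 𝓕.card with hfdef
  have hcard_le : ∀ X : Finset α, X.card ≤ d := by
    intro X
    rw [hddef, ← Finset.card_univ]; exact Finset.card_le_card (Finset.subset_univ X)
  have hu0big : 1024 ≤ u0 := by
    rw [hu0def]
    calc (1024:ℕ) = 2^10 := by norm_num
    _ ≤ 2^(d/2) := Nat.pow_le_pow_right (by norm_num) (by omega)
  have hu01 : u0 ≤ u1 := Nat.pow_le_pow_right (by norm_num) (by omega)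
  have hu1d : u1 ≤ 2*u0 := by
    rw [hu1def, hu0def]
    calc (2:ℕ)^((d+1)/2) ≤ 2^(d/2+1) := Nat.pow_le_pow_right (by norm_num) (by omega)
      _ = 2*2^(d/2) := by rw [pow_succ]; ring
  have hNdef : u1 * u0 = 2^d := by rw [hu1def, hu0def, ← pow_add]; congr 1; omega
  -- 𝓕 ⊆ R
  have h𝓕R : 𝓕 ⊆ R := fun F hF => Finset.mem_inter.2 ⟨subset_low hF, subset_high hF⟩
  have hfr : f ≤ r := Finset.card_le_card h𝓕R
  -- a strictly comparable pair in 𝓕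
  obtain ⟨F₀, hF₀⟩ := h𝓕
  obtain ⟨F₁, hF₁, hcomp⟩ := hni F₀ hF₀
  have hpair : ∃ X ∈ 𝓕, ∃ Y ∈ 𝓕, X ⊂ Y := by
    rcases hcomp with h | h
    · exact ⟨F₁, hF₁, F₀, hF₀, h⟩
    · exact ⟨F₀, hF₀, F₁, hF₁, h⟩
  obtain ⟨X₁, hX₁, Y₁, hY₁, hXY₁⟩ := hpair
  have hf2 : 2 ≤ f := by
    rw [hfdef]
    exact Finset.one_lt_card.2 ⟨X₁, hX₁, Y₁, hY₁, (ne_of_ssubset hXY₁)⟩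
  -- min and max size elements
  obtain ⟨Fl, hFl, hFlmax⟩ := Finset.exists_max_image 𝓕 Finset.card ⟨F₀, hF₀⟩
  obtain ⟨Fk, hFk, hFkmin⟩ := Finset.exists_min_image 𝓕 Finset.card ⟨F₀, hF₀⟩
  have hkl : Fk.card + 1 ≤ Fl.card := by
    have h1 : Fk.card ≤ X₁.card := hFkmin X₁ hX₁
    have h2 : Y₁.card ≤ Fl.card := hFlmax Y₁ hY₁
    have h3 : X₁.card < Y₁.card := Finset.card_lt_card hXY₁
    omega
  have hP := pow_le_card_low (𝓐 := 𝓕) hFl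
  have hQ := pow_le_card_high (𝓐 := 𝓕) hFk
  -- convexity input : P + Q ≥ 2^((d+2)/2) + 2^((d+1)/2) = u0 + u1 + u0
  have hconv : u0 + u1 + u0 ≤ P + Q := by
    have h1 : 2^((d+1+1)/2) + 2^((d+1)/2) ≤ 2^(Fl.card) + 2^(d - Fk.card) :=
      pow2_convex (by omega) (by have := hcard_le Fl; have := hcard_le Fk; omega)
    have h2 : 2^((d+1+1)/2) + 2^((d+1)/2) = u0 + u1 + u0 := by
      rw [hu0def, hu1def]
      rcases Nat.even_or_odd d with ⟨m, hm⟩ | ⟨m, hm⟩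
      · rw [show (d+1+1)/2 = d/2 + 1 by omega, show (d+1)/2 = d/2 by omega, pow_succ]
        ring
      · rw [show (d+1+1)/2 = (d+1)/2 by omega, show (d+1)/2 = d/2 + 1 by omega, pow_succ]
        ring
    calc u0 + u1 + u0 = 2^((d+1+1)/2) + 2^((d+1)/2) := h2.symm
      _ ≤ 2^(Fl.card) + 2^(d - Fk.card) := h1
      _ ≤ P + Q := Nat.add_le_add hP hQ
  -- Kleitman
  have hkle : r * 2^d ≤ P * Q := kleitman 𝓕 𝓕
  -- the element G₀ of 𝓖 bounds r
  obtain ⟨G₀, hG₀⟩ := h𝓖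
  have hG₀n𝓕 : G₀ ∉ 𝓕 := by
    intro h
    have : G₀ ∈ 𝓕 ∩ 𝓖 := Finset.mem_inter.2 ⟨h, hG₀⟩
    rw [hT] at this
    exact absurd this (Finset.notMem_empty G₀)
  have hrbound : r + u1 + u0 ≤ 2^d + 1 := by
    set LX := G₀.powerset with hLXdef
    set HX := (G₀ᶜ).powerset.image (fun Y => Y ∪ G₀) with hHXdef
    have hdisj : Disjoint R (LX ∪ HX) := by
      rw [Finset.disjoint_left]
      intro X hXR hXfan
      obtain ⟨hXl, hXh⟩ := Finset.mem_inter.1 hXR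
      obtain ⟨A, hA, hXA⟩ := mem_low.1 hXl
      obtain ⟨B, hB, hBX⟩ := mem_high.1 hXh
      rcases Finset.mem_union.1 hXfan with h | h
      · have hBG : B ⊆ G₀ := hBX.trans (Finset.mem_powerset.1 h)
        have hne : B ≠ G₀ := fun he => hG₀n𝓕 (he ▸ hB)
        exact (hW B hB G₀ hG₀).1 (ssubset_of_subset_of_ne hBG hne)
      · obtain ⟨Y, hY, hYX⟩ := Finset.mem_image.1 h
        have hGX : G₀ ⊆ X := hYX ▸ Finset.subset_union_right
        have hGA : G₀ ⊆ A := hGX.trans hXA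
        have hne : G₀ ≠ A := fun he => hG₀n𝓕 (he ▸ hA)
        exact (hW A hA G₀ hG₀).2 (ssubset_of_subset_of_ne hGA hne)
    have hLXcard : LX.card = 2^(G₀.card) := Finset.card_powerset G₀
    have hHXcard : HX.card = 2^(d - G₀.card) := by
      rw [hHXdef, Finset.card_image_of_injOn injOn_union_compl, Finset.card_powerset,
        Finset.card_compl]
    have hinterLH : (LX ∩ HX).card ≤ 1 := by
      have hsub : LX ∩ HX ⊆ {G₀} := by
        intro X hX
        obtain ⟨h1, h2⟩ := Finset.mem_inter.1 hX
        obtain ⟨Y, hY, hYX⟩ := Finset.mem_image.1 h2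
        have hGX : G₀ ⊆ X := hYX ▸ Finset.subset_union_right
        have hXG : X ⊆ G₀ := Finset.mem_powerset.1 h1
        simp [Finset.Subset.antisymm hXG hGX]
      calc (LX ∩ HX).card ≤ ({G₀} : Finset (Finset α)).card := Finset.card_le_card hsub
        _ = 1 := Finset.card_singleton G₀
    have hcu : (LX ∪ HX).card + (LX ∩ HX).card = LX.card + HX.card :=
      Finset.card_union_add_card_inter LX HX
    have hRfan : r + (LX ∪ HX).card ≤ 2^d := by
      rw [← Finset.card_union_of_disjoint hdisj, ← card_finsets (α := α)]
      exact Finset.card_le_card (Finset.subset_univ _)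
    have hx : u1 + u0 ≤ 2^(G₀.card) + 2^(d - G₀.card) := by
      rw [hu1def, hu0def]
      exact pow2_convex (by omega) (by have := hcard_le G₀; omega)
    omega
  -- the witness family U
  set U := (low 𝓕 ∪ high 𝓕) \ 𝓕 with hUdef
  have hUdisj : Disjoint (𝓕 ∪ 𝓖) U := by
    rw [Finset.disjoint_right]
    intro X hXU hXFG
    obtain ⟨hXu, hXn𝓕⟩ := Finset.mem_sdiff.1 hXU
    have hX𝓖 : X ∈ 𝓖 := by
      rcases Finset.mem_union.1 hXFG with h | h
      · exact absurd h hXn𝓕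
      · exact h
    rcases Finset.mem_union.1 hXu with hXl | hXh
    · obtain ⟨A, hA, hXA⟩ := mem_low.1 hXl
      have hne : X ≠ A := fun he => hXn𝓕 (he ▸ hA)
      exact (hW A hA X hX𝓖).2 (ssubset_of_subset_of_ne hXA hne)
    · obtain ⟨A, hA, hAX⟩ := mem_high.1 hXh
      have hne : A ≠ X := fun he => hXn𝓕 (he.symm ▸ hA)
      exact (hW A hA X hX𝓖).1 (ssubset_of_subset_of_ne hAX hne)
  -- counting
  have hc1 : (𝓕 ∪ 𝓖).card = f + 𝓖.card :=
    Finset.card_union_of_disjoint (Finset.disjoint_iff_inter_eq_empty.2 hT)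
  have hc2 : U.card + f = (low 𝓕 ∪ high 𝓕).card := by
    apply Finset.card_sdiff_add_card_eq_card
    exact fun X hX => Finset.mem_union.2 (Or.inl (subset_low hX))
  have hc3 : (low 𝓕 ∪ high 𝓕).card + r = P + Q :=
    Finset.card_union_add_card_inter (low 𝓕) (high 𝓕)
  have hc4 : (𝓕 ∪ 𝓖).card + U.card ≤ 2^d := by
    rw [← Finset.card_union_of_disjoint hUdisj, ← card_finsets (α := α)]
    exact Finset.card_le_card (Finset.subset_univ _)
  -- main inequality via residual_core
  have hmain : r + f + u1 + u0 ≤ P + Q + 3 := by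
    by_contra hcon
    push_neg at hcon
    have hcon' : P + Q + 4 ≤ r + f + u1 + u0 := by omega
    refine residual_core (u0 := (u0:ℤ)) (u1 := (u1:ℤ)) (N := ((2^d : ℕ) : ℤ))
      (P := (P:ℤ)) (Q := (Q:ℤ)) (r := (r:ℤ)) (f := (f:ℤ))
      ?_ ?_ ?_ ?_ ?_ ?_ ?_ ?_ ?_ ?_ ?_ ?_
    · exact_mod_cast hu0big
    · exact_mod_cast hu01
    · exact_mod_cast hu1d
    · exact_mod_cast hNdef
    · exact_mod_cast hf2
    · exact_mod_cast hfr
    · exact_mod_cast hkle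
    · positivity
    · positivity
    · exact_mod_cast hrbound
    · exact_mod_cast hconv
    · exact_mod_cast hcon'
  omega

/-- Main bound over an arbitrary finite ground type. -/
lemma main_core (hd : 1000 ≤ Fintype.card α) (𝓕 𝓖 : Finset (Finset α))
    (hW : ∀ F ∈ 𝓕, ∀ G ∈ 𝓖, ¬F ⊂ G ∧ ¬G ⊂ F) (h𝓕 : 𝓕.Nonempty) (h𝓖 : 𝓖.Nonempty) :
    𝓕.card + 𝓖.card + 2^((Fintype.card α + 1)/2) + 2^(Fintype.card α / 2)
      ≤ 2^(Fintype.card α) + 3 := by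
  by_cases hT : (𝓕 ∩ 𝓖).Nonempty
  · exact case_one hd 𝓕 𝓖 hW hT
  by_cases hiso : ∃ F₀ ∈ 𝓕, ∀ F ∈ 𝓕, ¬F ⊂ F₀ ∧ ¬F₀ ⊂ F
  · obtain ⟨F₀, hF₀, hisoF⟩ := hiso
    have hW' : ∀ F ∈ 𝓕, ∀ G ∈ insert F₀ 𝓖, ¬F ⊂ G ∧ ¬G ⊂ F := by
      intro F hF G hG
      rcases Finset.mem_insert.1 hG with rfl | hG'
      · exact ⟨(hisoF F hF).1, (hisoF F hF).2⟩
      · exact hW F hF G hG'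
    have h1 := case_one hd 𝓕 (insert F₀ 𝓖) hW'
      ⟨F₀, Finset.mem_inter.2 ⟨hF₀, Finset.mem_insert_self _ _⟩⟩
    have h2 : 𝓖.card ≤ (insert F₀ 𝓖).card :=
      Finset.card_le_card (Finset.subset_insert _ _)
    omega
  · have hTe : 𝓕 ∩ 𝓖 = ∅ := Finset.not_nonempty_iff_eq_empty.1 hT
    have hni : ∀ F₀ ∈ 𝓕, ∃ F ∈ 𝓕, F ⊂ F₀ ∨ F₀ ⊂ F := by
      intro F₀ hF₀
      by_contra hno
      push_neg at hno
      exact hiso ⟨F₀, hF₀, fun F hF => hno F hF⟩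
    exact residual hd 𝓕 𝓖 hW h𝓕 h𝓖 hTe hni


end WCSproof

theorem weak_cross_sperner_sum_bound :
    ∃ n₀ : ℕ, ∀ n : ℕ, n₀ ≤ n →
      ∀ 𝓕 𝓖 : Finset (Finset ℕ),
        𝓕 ⊆ (Finset.Icc 1 n).powerset → 𝓖 ⊆ (Finset.Icc 1 n).powerset →
        𝓕.Nonempty → 𝓖.Nonempty → WeakCrossSperner 𝓕 𝓖 →
        𝓕.card + 𝓖.card ≤ 2 ^ n - 2 ^ ((n + 1) / 2) - 2 ^ (n / 2) + 3 := by
  refine ⟨1000, fun n hn 𝓕 𝓖 h𝓕sub h𝓖sub h𝓕ne h𝓖ne hW => ?_⟩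
  set I := Finset.Icc 1 n with hIdef
  let α := {x : ℕ // x ∈ I}
  have hcard : Fintype.card α = n := by
    rw [Fintype.card_coe, hIdef, Nat.card_Icc]
    omega
  let ι : Finset ℕ → Finset α := fun F => F.subtype (· ∈ I)
  have hmemι : ∀ (F : Finset ℕ) (x : α), x ∈ ι F ↔ (x : ℕ) ∈ F := by
    intro F x
    exact Finset.mem_subtype
  have hsub_iff : ∀ F G : Finset ℕ, F ⊆ I → (ι F ⊆ ι G ↔ F ⊆ G) := by
    intro F G hFI
    constructor
    · intro h x hxF
      have hxI : x ∈ I := hFI hxF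
      have : (⟨x, hxI⟩ : α) ∈ ι F := (hmemι F _).2 hxF
      exact (hmemι G _).1 (h this)
    · intro h x hx
      exact (hmemι G x).2 (h ((hmemι F x).1 hx))
  have hssub_iff : ∀ F G : Finset ℕ, F ⊆ I → G ⊆ I → (ι F ⊂ ι G ↔ F ⊂ G) := by
    intro F G hFI hGI
    rw [Finset.ssubset_def, Finset.ssubset_def, hsub_iff F G hFI, hsub_iff G F hGI]
  have hinj : ∀ F G : Finset ℕ, F ⊆ I → G ⊆ I → ι F = ι G → F = G := by
    intro F G hFI hGI he
    exact Finset.Subset.antisymm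
      ((hsub_iff F G hFI).1 (le_of_eq he)) ((hsub_iff G F hGI).1 (le_of_eq he.symm))
  set 𝓕' := 𝓕.image ι with h𝓕'def
  set 𝓖' := 𝓖.image ι with h𝓖'def
  have h𝓕'card : 𝓕'.card = 𝓕.card := by
    apply Finset.card_image_of_injOn
    intro F hF G hG he
    exact hinj F G (Finset.mem_powerset.1 (h𝓕sub hF)) (Finset.mem_powerset.1 (h𝓕sub hG)) he
  have h𝓖'card : 𝓖'.card = 𝓖.card := by
    apply Finset.card_image_of_injOn
    intro F hF G hG he
    exact hinj F G (Finset.mem_powerset.1 (h𝓖sub hF)) (Finset.mem_powerset.1 (h𝓖sub hG)) he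
  have hW' : ∀ F' ∈ 𝓕', ∀ G' ∈ 𝓖', ¬F' ⊂ G' ∧ ¬G' ⊂ F' := by
    intro F' hF' G' hG'
    obtain ⟨F, hF, rfl⟩ := Finset.mem_image.1 hF'
    obtain ⟨G, hG, rfl⟩ := Finset.mem_image.1 hG'
    have hFI := Finset.mem_powerset.1 (h𝓕sub hF)
    have hGI := Finset.mem_powerset.1 (h𝓖sub hG)
    constructor
    · intro hss
      exact (hW F hF G hG).1 ((hssub_iff F G hFI hGI).1 hss)
    · intro hss
      exact (hW F hF G hG).2 ((hssub_iff G F hGI hFI).1 hss)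
  have hmain := WCSproof.main_core (α := α) (by omega) 𝓕' 𝓖' hW'
    (h𝓕ne.image ι) (h𝓖ne.image ι)
  rw [hcard, h𝓕'card, h𝓖'card] at hmain
  have hle : 2^((n+1)/2) + 2^(n/2) ≤ 2^n := by
    calc 2^((n+1)/2) + 2^(n/2) ≤ 2^((n+1)/2) * 2^(n/2) :=
          WCSproof.add_le_mul2
            (by calc (2:ℕ) = 2^1 := by norm_num
                _ ≤ _ := Nat.pow_le_pow_right (by norm_num) (by omega))
            (by calc (2:ℕ) = 2^1 := by norm_num
                _ ≤ _ := Nat.pow_le_pow_right (by norm_num) (by omega))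
      _ = 2^n := by rw [← pow_add]; congr 1; omega
  omega
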